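/- Let n, m be finite types and let traceOut : Matrix (n × m) (n × m) ℂ →ₗ[ℂ] Matrix n n ℂ be defined by (traceOut M) i j = ∑ b : m, M (i, b) (j, b). Then for every Hermitian matrix H ∈ Matrix (n × m) (n × m) ℂ, ‖traceOut H‖₁ ≤ ‖H‖₁. -/

import Mathlib

open scoped ComplexOrder

/-- The trace norm `‖A‖₁` of a complex matrix `A`: the trace of the positive
semidefinite square root of `Aᴴ * A`. -/
noncomputable def traceNorm {n : Type*} [Fintype n] [DecidableEq n] (A : Matrix n n ℂ) : ℝ :=
  ((Matrix.posSemidef_conjTranspose_mul_self A).1.eigenvectorUnitary.1 *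
      Matrix.diagonal (((↑) : ℝ → ℂ) ∘ (√·) ∘ (Matrix.posSemidef_conjTranspose_mul_self A).1.eigenvalues) *
      (star (Matrix.posSemidef_conjTranspose_mul_self A).1.eigenvectorUnitary : Matrix n n ℂ)).trace.re

/-- The partial trace over the second tensor factor, in the matrix representation where
the joint system is indexed by the product type `n × m`. -/
noncomputable def traceOut (n m : Type*) [Fintype m] :
    Matrix (n × m) (n × m) ℂ →ₗ[ℂ] Matrix n n ℂ where
  toFun M := Matrix.of fun i j => ∑ b : m, M (i, b) (j, b)
  map_add' M N := by
    ext i j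
    simp [Finset.sum_add_distrib]
  map_smul' z M := by
    ext i j
    simp [Finset.mul_sum]

open Matrix
lemma traceNorm_eq_sum_abs {n : Type*} [Fintype n] [DecidableEq n]
    {A : Matrix n n ℂ} (hA : A.IsHermitian) :
    traceNorm A = ∑ i, |hA.eigenvalues i| := by
  set U : Matrix n n ℂ := (hA.eigenvectorUnitary : Matrix n n ℂ) with hUdef
  have hU : U ∈ Matrix.unitaryGroup n ℂ := hA.eigenvectorUnitary.2
  have hUU : star U * U = 1 := Matrix.mem_unitaryGroup_iff'.mp hU
  set B : Matrix n n ℂ := U * Matrix.diagonal (fun i => Complex.ofReal |hA.eigenvalues i|) * star U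
    with hBdef
  have hBpsd : B.PosSemidef := by
    apply Matrix.PosSemidef.mul_mul_conjTranspose_same
    refine Matrix.posSemidef_diagonal_iff.mpr fun i => ?_
    exact_mod_cast abs_nonneg (hA.eigenvalues i)
  have key : ∀ D E : Matrix n n ℂ,
      (U * D * star U) * (U * E * star U) = U * (D * E) * star U := fun D E => by
    calc (U * D * star U) * (U * E * star U)
        = U * (D * ((star U * U) * E)) * star U := by noncomm_ring
      _ = U * (D * E) * star U := by rw [hUU, Matrix.one_mul]
  have hsq : B ^ 2 = Aᴴ * A := by
    rw [hA.eq]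
    conv_rhs => rw [hA.spectral_theorem, Unitary.conjStarAlgAut_apply, ← hUdef]
    rw [hBdef, pow_two, key, key]
    have hdd : (fun i => Complex.ofReal |hA.eigenvalues i| * Complex.ofReal |hA.eigenvalues i|)
        = fun i => (RCLike.ofReal ∘ hA.eigenvalues) i * (RCLike.ofReal ∘ hA.eigenvalues) i := by
      funext i
      simp only [Function.comp_apply, Complex.coe_algebraMap]
      rw [← Complex.ofReal_mul, ← Complex.ofReal_mul, abs_mul_abs_self]
    rw [Matrix.diagonal_mul_diagonal, Matrix.diagonal_mul_diagonal, hdd]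
  have hsqrt : B = (Matrix.posSemidef_conjTranspose_mul_self A).1.eigenvectorUnitary.1 *
      Matrix.diagonal (((↑) : ℝ → ℂ) ∘ (√·) ∘ (Matrix.posSemidef_conjTranspose_mul_self A).1.eigenvalues) *
      (star (Matrix.posSemidef_conjTranspose_mul_self A).1.eigenvectorUnitary : Matrix n n ℂ) := by
    open scoped MatrixOrder in
    have hP := Matrix.posSemidef_conjTranspose_mul_self A
    have h1 : CFC.sqrt (Aᴴ * A) = B :=
      CFC.sqrt_unique (by rw [← pow_two]; exact hsq) hBpsd.nonneg
    rw [← h1, CFC.sqrt_eq_cfc, cfc_nnreal_eq_real _ (Aᴴ * A) hP.nonneg, hP.1.cfc_eq,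
      Matrix.IsHermitian.cfc, Unitary.conjStarAlgAut_apply]
    congr 3
    funext i
    simp [Real.coe_sqrt, Real.coe_toNNReal', max_eq_left (hP.eigenvalues_nonneg i)]
  rw [traceNorm, ← hsqrt, hBdef, Matrix.trace_mul_cycle, hUU, Matrix.one_mul,
    Matrix.trace_diagonal]
  rw [Complex.re_sum]
  simp

-- entries of W * diagonal d * star W
lemma conj_entry {α β : Type*} [Fintype β] [DecidableEq β] (W : Matrix α β ℂ) (d : β → ℂ)
    (p q : α) :
    (W * Matrix.diagonal d * Wᴴ) p q = ∑ i, W p i * d i * (starRingEnd ℂ) (W q i) := by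
  simp only [Matrix.mul_apply, Matrix.conjTranspose_apply, Matrix.diagonal_apply,
    ite_mul, zero_mul, mul_ite, mul_zero, Finset.sum_ite_eq, Finset.mem_univ, if_true,
    Finset.sum_mul, RCLike.star_def]
  rw [Finset.sum_comm]
  simp



/-- Discarding the second register cannot increase the trace norm of a Hermitian matrix. -/
theorem traceNorm_traceOut_le {n m : Type*} [Fintype n] [DecidableEq n]
    [Fintype m] [DecidableEq m]
    (H : Matrix (n × m) (n × m) ℂ) (hH : H.IsHermitian) :
    traceNorm (traceOut n m H) ≤ traceNorm H := by
  set K : Matrix n n ℂ := traceOut n m H with hKdef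
  have hKentry : ∀ a a', K a a' = ∑ b, H (a, b) (a', b) := fun a a' => rfl
  have hK : K.IsHermitian := by
    ext p q
    rw [Matrix.conjTranspose_apply, hKentry, hKentry, star_sum]
    exact Finset.sum_congr rfl fun b _ => by
      rw [← Matrix.conjTranspose_apply, hH.eq]
  set U : Matrix (n × m) (n × m) ℂ := (hH.eigenvectorUnitary : Matrix (n × m) (n × m) ℂ) with hUdef
  set V : Matrix n n ℂ := (hK.eigenvectorUnitary : Matrix n n ℂ) with hVdef
  have hUu : star U * U = 1 := Matrix.mem_unitaryGroup_iff'.mp hH.eigenvectorUnitary.2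
  have hVu' : V * star V = 1 := Matrix.mem_unitaryGroup_iff.mp hK.eigenvectorUnitary.2
  set V' : Matrix (n × m) (n × m) ℂ :=
    Matrix.of (fun (p q : n × m) => V p.1 q.1 * (if p.2 = q.2 then (1:ℂ) else 0)) with hV'def
  have hVV'1 : V' * star V' = 1 := by
    ext p q
    rw [Matrix.star_eq_conjTranspose, Matrix.mul_apply, Fintype.sum_prod_type]
    simp only [hV'def, Matrix.conjTranspose_apply, Matrix.of_apply, mul_ite, mul_one, mul_zero,
      star_mul', apply_ite (star : ℂ → ℂ), star_one, star_zero, ite_mul, zero_mul, one_mul]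
    simp only [Finset.sum_ite_eq, Finset.mem_univ, if_true]
    by_cases hb : p.2 = q.2
    · simp only [hb, eq_self_iff_true, if_true]
      have h := congrFun (congrFun hVu' p.1) q.1
      rw [Matrix.mul_apply] at h
      simp only [Matrix.star_apply] at h
      rw [h]
      simp [Matrix.one_apply, Prod.ext_iff, hb]
    · simp [hb, Matrix.one_apply, Prod.ext_iff]
  set X : Matrix (n × m) (n × m) ℂ := star V' * U with hXdef
  have hXu : star X * X = 1 := by
    rw [hXdef, StarMul.star_mul, star_star]
    calc star U * V' * (star V' * U) = star U * (V' * star V') * U := by noncomm_ring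
      _ = 1 := by rw [hVV'1, Matrix.mul_one, hUu]
  set lam := hH.eigenvalues with hlam
  set mu := hK.eigenvalues with hmudef
  set D : Matrix (n × m) (n × m) ℂ := Matrix.diagonal (RCLike.ofReal ∘ lam) with hD
  have hspec : star V' * H * V' = X * D * star X := by
    conv_lhs => rw [hH.spectral_theorem, Unitary.conjStarAlgAut_apply, ← hUdef]
    rw [hXdef, StarMul.star_mul, star_star]
    noncomm_ring
  have h2 : ∀ (j : n) (b : m), (star V' * H * V') (j, b) (j, b)
      = ∑ a' : n, ∑ a : n, (starRingEnd ℂ) (V a j) * H (a, b) (a', b) * V a' j := by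
    intro j b
    rw [Matrix.star_eq_conjTranspose, Matrix.mul_apply, Fintype.sum_prod_type]
    simp only [hV'def, Matrix.of_apply, mul_ite, mul_one, mul_zero, ite_mul, zero_mul,
      Finset.sum_ite_eq, Finset.sum_ite_eq', Finset.mem_univ, if_true]
    refine Finset.sum_congr rfl fun a' _ => ?_
    rw [Matrix.mul_apply, Fintype.sum_prod_type, Finset.sum_mul]
    refine Finset.sum_congr rfl fun a _ => ?_
    simp only [Matrix.conjTranspose_apply, Matrix.of_apply]
    rw [show (∑ x : m, star (if x = b then V a j else 0) * H (a, x) (a', b))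
        = ∑ x : m, (if x = b then star (V a j) * H (a, x) (a', b) else 0) from
      Finset.sum_congr rfl fun x _ => by split <;> simp,
      Finset.sum_ite_eq' Finset.univ b fun x => star (V a j) * H (a, x) (a', b)]
    simp only [Finset.mem_univ, if_true, RCLike.star_def]
  have hmu : ∀ j, ((mu j : ℝ) : ℂ)
      = ∑ b, ∑ i, ((lam i : ℝ) : ℂ) * ((Complex.normSq (X (j, b) i) : ℝ) : ℂ) := by
    intro j
    have h1 : ((mu j : ℝ) : ℂ) = (star V * K * V) j j := by
      rw [show star V * K * V = Matrix.diagonal (RCLike.ofReal ∘ hK.eigenvalues) by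
        simpa [hVdef] using hK.conjStarAlgAut_star_eigenvectorUnitary]
      simp [Matrix.diagonal_apply_eq, hmudef]
    have h3 : (star V * K * V) j j = ∑ b, (star V' * H * V') (j, b) (j, b) := by
      calc (star V * K * V) j j
          = ∑ a', ∑ a, star (V a j) * K a a' * V a' j := by
            rw [Matrix.mul_apply]
            refine Finset.sum_congr rfl fun a' _ => ?_
            rw [Matrix.mul_apply, Finset.sum_mul]
            refine Finset.sum_congr rfl fun a _ => ?_
            rw [Matrix.star_apply]
        _ = ∑ a', ∑ a, ∑ b, star (V a j) * H (a, b) (a', b) * V a' j := by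
            refine Finset.sum_congr rfl fun a' _ => Finset.sum_congr rfl fun a _ => ?_
            rw [hKentry, Finset.mul_sum, Finset.sum_mul]
        _ = ∑ a', ∑ b, ∑ a, star (V a j) * H (a, b) (a', b) * V a' j :=
            Finset.sum_congr rfl fun a' _ => Finset.sum_comm
        _ = ∑ b, ∑ a', ∑ a, star (V a j) * H (a, b) (a', b) * V a' j := Finset.sum_comm
        _ = ∑ b, (star V' * H * V') (j, b) (j, b) := by
            refine Finset.sum_congr rfl fun b _ => ?_
            rw [h2 j b]
            rfl
    have h4 : ∀ b : m, (star V' * H * V') (j, b) (j, b)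
        = ∑ i, ((lam i : ℝ) : ℂ) * ((Complex.normSq (X (j, b) i) : ℝ) : ℂ) := by
      intro b
      rw [hspec, Matrix.star_eq_conjTranspose X, conj_entry]
      refine Finset.sum_congr rfl fun i _ => ?_
      rw [mul_comm (X (j, b) i) _, mul_assoc, Complex.mul_conj]
      simp only [Function.comp_apply, Complex.coe_algebraMap, Complex.ofReal_mul]
    rw [h1, h3]
    exact Finset.sum_congr rfl fun b _ => h4 b
  have hnorm : ∀ i, ∑ p : n × m, Complex.normSq (X p i) = 1 := by
    intro i
    have h := congrFun (congrFun hXu i) i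
    rw [Matrix.mul_apply] at h
    simp only [Matrix.star_apply, Matrix.one_apply_eq] at h
    have h' : ((∑ p : n × m, (Complex.normSq (X p i) : ℂ))) = 1 := by
      rw [← h]
      refine Finset.sum_congr rfl fun p _ => ?_
      rw [← Complex.mul_conj]
      exact (mul_comm _ _)
    exact_mod_cast h'
  have hmuR : ∀ j, mu j = ∑ b, ∑ i, lam i * Complex.normSq (X (j, b) i) := by
    intro j
    have := hmu j
    push_cast at this
    exact_mod_cast this
  rw [traceNorm_eq_sum_abs hK, traceNorm_eq_sum_abs hH]
  calc ∑ j, |hK.eigenvalues j|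
      ≤ ∑ j, ∑ b, ∑ i, |lam i| * Complex.normSq (X (j, b) i) := by
        refine Finset.sum_le_sum fun j _ => ?_
        rw [show hK.eigenvalues j = mu j from rfl, hmuR j]
        refine (Finset.abs_sum_le_sum_abs _ _).trans ?_
        refine Finset.sum_le_sum fun b _ => ?_
        refine (Finset.abs_sum_le_sum_abs _ _).trans ?_
        refine Finset.sum_le_sum fun i _ => ?_
        rw [abs_mul, abs_of_nonneg (Complex.normSq_nonneg _)]
    _ = ∑ i, ∑ p : n × m, |lam i| * Complex.normSq (X p i) := by
        calc ∑ j, ∑ b, ∑ i, |lam i| * Complex.normSq (X (j, b) i)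
            = ∑ j, ∑ i, ∑ b, |lam i| * Complex.normSq (X (j, b) i) :=
              Finset.sum_congr rfl fun j _ => Finset.sum_comm
          _ = ∑ i, ∑ j, ∑ b, |lam i| * Complex.normSq (X (j, b) i) := Finset.sum_comm
          _ = ∑ i, ∑ p : n × m, |lam i| * Complex.normSq (X p i) := by
              refine Finset.sum_congr rfl fun i _ => ?_
              exact (Fintype.sum_prod_type
                (f := fun p : n × m => |lam i| * Complex.normSq (X p i))).symm
    _ = ∑ i, |lam i| := by
        refine Finset.sum_congr rfl fun i _ => ?_
        rw [← Finset.mul_sum, hnorm i, mul_one]
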